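/- Let h : ℝ² → ℝ² be defined by h(y) = y/(1 + ‖y‖²)^{1/2}. Then the closure in ℝ² of the set h(ℝ × ℤ) = {h(t, j) : t ∈ ℝ, j ∈ ℤ} equals h(ℝ × ℤ) ∪ S¹, where S¹ = {y ∈ ℝ² : ‖y‖ = 1}. In particular, every point of the unit sphere is a limit of points h(n_j p_j, m_j q_j) with integer coordinates. -/

import Mathlib

open Filter Topology Metric Set

lemma floor_div_tendsto' (b : ℝ) :
    Tendsto (fun n : ℕ => ((⌊(n : ℝ) * b⌋ : ℝ) / n)) atTop (𝓝 b) := by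
  rw [← tendsto_sub_nhds_zero_iff]
  refine squeeze_zero_norm' ?_ tendsto_one_div_atTop_nhds_zero_nat
  filter_upwards [eventually_ge_atTop 1] with n hn
  have hn0 : (0 : ℝ) < n := by exact_mod_cast hn
  rw [Real.norm_eq_abs, show (⌊(n : ℝ) * b⌋ : ℝ) / n - b = ((⌊(n : ℝ) * b⌋ : ℝ) - n * b) / n by
    field_simp, abs_div, abs_of_pos hn0, div_le_div_iff_of_pos_right hn0]
  rw [abs_le]
  constructor
  · nlinarith [Int.sub_one_lt_floor ((n : ℝ) * b)]
  · nlinarith [Int.floor_le ((n : ℝ) * b)]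

lemma scalar_tendsto' (a b : ℝ) (hab : a ^ 2 + b ^ 2 = 1) :
    Tendsto (fun n : ℕ =>
        (1 + (((n : ℝ) * a) ^ 2 + ((⌊(n : ℝ) * b⌋ : ℤ) : ℝ) ^ 2)) ^ (-(1 / 2) : ℝ) * n)
      atTop (𝓝 1) := by
  have hlim : Tendsto (fun n : ℕ =>
      (1 / (n : ℝ) ^ 2 + (a ^ 2 + ((⌊(n : ℝ) * b⌋ : ℝ) / n) ^ 2)) ^ (-(1 / 2) : ℝ))
      atTop (𝓝 1) := by
    have h1 : Tendsto (fun n : ℕ => 1 / (n : ℝ) ^ 2) atTop (𝓝 0) := by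
      have := (tendsto_one_div_atTop_nhds_zero_nat (𝕜 := ℝ)).mul (tendsto_one_div_atTop_nhds_zero_nat (𝕜 := ℝ))
      simpa using this.congr (fun n => by ring)
    have h2 : Tendsto (fun n : ℕ => a ^ 2 + ((⌊(n : ℝ) * b⌋ : ℝ) / n) ^ 2) atTop
        (𝓝 (a ^ 2 + b ^ 2)) := tendsto_const_nhds.add ((floor_div_tendsto' b).pow 2)
    have h3 := h1.add h2
    rw [zero_add, hab] at h3
    have h4 : ContinuousAt (fun x : ℝ => x ^ (-(1 / 2) : ℝ)) 1 :=
      Real.continuousAt_rpow_const 1 _ (Or.inl one_ne_zero)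
    have := h4.tendsto.comp h3
    simpa [Real.one_rpow, Function.comp_def] using this
  refine hlim.congr' ?_
  filter_upwards [eventually_ge_atTop 1] with n hn
  have hn0 : (0 : ℝ) < n := by exact_mod_cast hn
  have hc : (0 : ℝ) < 1 + (((n : ℝ) * a) ^ 2 + ((⌊(n : ℝ) * b⌋ : ℤ) : ℝ) ^ 2) := by positivity
  have hin : 1 / (n : ℝ) ^ 2 + (a ^ 2 + ((⌊(n : ℝ) * b⌋ : ℝ) / n) ^ 2)
      = (1 + (((n : ℝ) * a) ^ 2 + ((⌊(n : ℝ) * b⌋ : ℤ) : ℝ) ^ 2)) / (n : ℝ) ^ 2 := by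
    field_simp
  rw [hin, Real.div_rpow hc.le (by positivity)]
  have hpow : ((n : ℝ) ^ 2) ^ (-(1 / 2) : ℝ) = (n : ℝ)⁻¹ := by
    rw [← Real.rpow_natCast (n : ℝ) 2, ← Real.rpow_mul hn0.le]
    norm_num
    exact Real.rpow_neg_one _
  rw [hpow, div_inv_eq_mul]

noncomputable def hmap : EuclideanSpace ℝ (Fin 2) → EuclideanSpace ℝ (Fin 2) :=
  fun y => ((1 + ‖y‖ ^ 2) ^ (-(1 / 2) : ℝ)) • y

abbrev Agrid : Set (EuclideanSpace ℝ (Fin 2)) :=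
  {y : EuclideanSpace ℝ (Fin 2) | ∃ (t : ℝ) (j : ℤ), y = ![t, (j : ℝ)]}

lemma hmap_eq (y : EuclideanSpace ℝ (Fin 2)) :
    hmap y = OpenPartialHomeomorph.univUnitBall y := by
  rw [hmap, OpenPartialHomeomorph.univUnitBall_apply]
  congr 1
  rw [Real.rpow_neg (by positivity), Real.sqrt_eq_rpow]

lemma hmap_eq' (y : EuclideanSpace ℝ (Fin 2)) :
    hmap y = ((Homeomorph.unitBall y : ball (0 : EuclideanSpace ℝ (Fin 2)) 1) :
      EuclideanSpace ℝ (Fin 2)) := by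
  rw [hmap_eq y, Homeomorph.unitBall_apply_coe, OpenPartialHomeomorph.univUnitBall_apply]

lemma hmap_mem_ball (y : EuclideanSpace ℝ (Fin 2)) :
    hmap y ∈ ball (0 : EuclideanSpace ℝ (Fin 2)) 1 := by
  rw [hmap_eq y]
  exact OpenPartialHomeomorph.univUnitBall.map_source (mem_univ y)

lemma Agrid_closed : IsClosed Agrid := by
  have : Agrid = (fun y : EuclideanSpace ℝ (Fin 2) => y 1) ⁻¹'
      (Set.range ((↑) : ℤ → ℝ)) := by
    ext y
    constructor
    · rintro ⟨t, j, hy⟩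
      exact ⟨j, by simp [hy]⟩
    · rintro ⟨j, hj⟩
      refine ⟨y 0, j, ?_⟩
      funext i
      fin_cases i <;> simp [hj]
  rw [this]
  exact Int.isClosedEmbedding_coe_real.isClosed_range.preimage (PiLp.continuous_apply 2 _ (1 : Fin 2))

lemma main_lemma :
    closure (hmap '' Agrid)
      = hmap '' Agrid ∪ Metric.sphere (0 : EuclideanSpace ℝ (Fin 2)) 1 := by
  apply Set.Subset.antisymm
  · intro x hx
    have hx1 : ‖x‖ ≤ 1 := by
      have hsub : closure (hmap '' Agrid) ⊆ closedBall (0 : EuclideanSpace ℝ (Fin 2)) 1 := by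
        apply closure_minimal ?_ isClosed_closedBall
        rintro _ ⟨y, -, rfl⟩
        exact ball_subset_closedBall (hmap_mem_ball y)
      simpa using hsub hx
    rcases eq_or_lt_of_le hx1 with heq | hlt
    · exact Or.inr (by simpa using heq)
    · left
      have hmem : x ∈ ball (0 : EuclideanSpace ℝ (Fin 2)) 1 := by simpa using hlt
      have hclosed : IsClosed ((Homeomorph.unitBall :
          EuclideanSpace ℝ (Fin 2) ≃ₜ ball (0 : EuclideanSpace ℝ (Fin 2)) 1) '' Agrid) :=
        (Homeomorph.unitBall).isClosedMap Agrid Agrid_closed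
      obtain ⟨D, hD, hDA⟩ := isClosed_induced_iff.mp hclosed
      have himg : hmap '' Agrid = D ∩ ball (0 : EuclideanSpace ℝ (Fin 2)) 1 := by
        have h1 : hmap '' Agrid = ((↑) : ball (0 : EuclideanSpace ℝ (Fin 2)) 1 →
            EuclideanSpace ℝ (Fin 2)) '' ((Homeomorph.unitBall :
            EuclideanSpace ℝ (Fin 2) ≃ₜ ball (0 : EuclideanSpace ℝ (Fin 2)) 1) '' Agrid) := by
          rw [← image_comp]
          exact image_congr fun y _ => hmap_eq' y
        rw [h1, ← hDA, Subtype.image_preimage_coe, inter_comm]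
      have hxD : x ∈ D := by
        have hsub : closure (hmap '' Agrid) ⊆ D := by
          apply closure_minimal ?_ hD
          rw [himg]; exact inter_subset_left
        exact hsub hx
      rw [himg]
      exact ⟨hxD, hmem⟩
  · rintro x (hx | hx)
    · exact subset_closure hx
    · set a : ℝ := x 0 with ha
      set b : ℝ := x 1 with hb
      have hab : a ^ 2 + b ^ 2 = 1 := by
        have hnx : ‖x‖ = 1 := by simpa using hx
        rw [EuclideanSpace.norm_eq] at hnx
        have := Real.sqrt_eq_one.mp (by simpa [Fin.sum_univ_two, Real.norm_eq_abs, sq_abs]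
          using hnx)
        simpa [sq_abs] using this
      set u : ℕ → EuclideanSpace ℝ (Fin 2) :=
        fun n => WithLp.toLp 2 ![(n : ℝ) * a, ((⌊(n : ℝ) * b⌋ : ℤ) : ℝ)] with hu
      have huA : ∀ n, u n ∈ Agrid := fun n => ⟨(n : ℝ) * a, ⌊(n : ℝ) * b⌋, rfl⟩
      have hnorm : ∀ n, ‖u n‖ ^ 2 = ((n : ℝ) * a) ^ 2 + ((⌊(n : ℝ) * b⌋ : ℤ) : ℝ) ^ 2 := by
        intro n
        rw [EuclideanSpace.norm_eq, Real.sq_sqrt (by positivity)]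
        simp [hu, Fin.sum_univ_two, Real.norm_eq_abs, sq_abs]
      have hcoord : ∀ i : Fin 2, Tendsto (fun n : ℕ => hmap (u n) i) atTop (𝓝 (x i)) := by
        intro i
        have hs := scalar_tendsto' a b hab
        fin_cases i
        · have heq : (fun n : ℕ => hmap (u n) 0)
              = fun n : ℕ => ((1 + (((n : ℝ) * a) ^ 2 + ((⌊(n : ℝ) * b⌋ : ℤ) : ℝ) ^ 2))
                  ^ (-(1 / 2) : ℝ) * n) * a := by
            funext n
            show (1 + ‖u n‖ ^ 2) ^ (-(1 / 2) : ℝ) * (u n 0) = _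
            rw [hnorm n]
            show _ * ((n : ℝ) * a) = _
            ring
          have := hs.mul_const a
          rw [one_mul] at this
          exact heq ▸ this
        · have hr := floor_div_tendsto' b
          have hmul := hs.mul hr
          rw [one_mul] at hmul
          refine hmul.congr' ?_
          filter_upwards [eventually_ge_atTop 1] with n hn
          have hn0 : (0 : ℝ) < n := by exact_mod_cast hn
          show _ = (1 + ‖u n‖ ^ 2) ^ (-(1 / 2) : ℝ) * (u n 1)
          rw [hnorm n]
          show _ = _ * ((⌊(n : ℝ) * b⌋ : ℤ) : ℝ)
          field_simp
      have hten : Tendsto (fun n : ℕ => hmap (u n)) atTop (𝓝 x) := by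
        have hpi : Tendsto (fun n : ℕ => (fun i => hmap (u n) i)) atTop (𝓝 (fun i => x i)) :=
          tendsto_pi_nhds.mpr hcoord
        exact ((PiLp.continuous_toLp 2 (fun _ : Fin 2 => ℝ)).tendsto _).comp hpi
      exact mem_closure_of_tendsto hten (Eventually.of_forall fun n => ⟨u n, huA n, rfl⟩)

/-- With `h(y) = y / (1 + ‖y‖²)^{1/2}`, the closure in `ℝ²` of `h(ℝ × ℤ)` is
`h(ℝ × ℤ) ∪ S¹` where `S¹` is the unit sphere. -/
theorem stmt3 :
    letI h : EuclideanSpace ℝ (Fin 2) → EuclideanSpace ℝ (Fin 2) :=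
      fun y => ((1 + ‖y‖ ^ 2) ^ (-(1 / 2) : ℝ)) • y
    closure (h '' {y : EuclideanSpace ℝ (Fin 2) | ∃ (t : ℝ) (j : ℤ), y = ![t, (j : ℝ)]})
      = h '' {y : EuclideanSpace ℝ (Fin 2) | ∃ (t : ℝ) (j : ℤ), y = ![t, (j : ℝ)]}
        ∪ Metric.sphere (0 : EuclideanSpace ℝ (Fin 2)) 1 :=
  main_lemma
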